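/- Let G be a group of nilpotency class at most two, i.e., ⁅g,h⁆ ∈ Z(G) for all g, h ∈ G (so the identity endomorphism is commutator-central), and let α ∈ 𝓔. Let σ : 𝓔 → 𝓔 be the group homomorphism determined by σ(of φ) = (of φ)⁻¹ for each endomorphism φ, and set β := (of id_G)⁻¹ · σ(α) ∈ 𝓔. Then for all g, h ∈ G, g ∘_{id,β} h = (g⁻¹ ∘_{id,α} h⁻¹)⁻¹; that is, the opposite brace operation ĝ∘_α of ∘_{id,α} is itself of the form ∘_{id,β} and hence belongs to the same brace block. -/

import Mathlib

/-- Evaluation of an element of the free group `𝓔 = FreeGroup (Monoid.End G)`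
at an element `g : G`: the image of `α` under the homomorphism `𝓔 → G`
given by `FreeGroup.lift (fun φ => φ g)`. -/
def evalE {G : Type*} [Group G] (α : FreeGroup (Monoid.End G)) (g : G) : G :=
  FreeGroup.lift (fun φ : Monoid.End G => φ g) α

/-- The binary operation `g ∘_{ψ,α} h = g · ψ_α(g) · h · ψ_α(g)⁻¹`, where
`ψ_α(g) = ψ (α(g))`. -/
def op {G : Type*} [Group G] (ψ : Monoid.End G) (α : FreeGroup (Monoid.End G)) (g h : G) : G :=
  g * ψ (evalE α g) * h * (ψ (evalE α g))⁻¹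

lemma evalE_sigma {G : Type*} [Group G] (α : FreeGroup (Monoid.End G)) (g : G) :
    evalE (FreeGroup.lift (fun φ : Monoid.End G => (FreeGroup.of φ)⁻¹) α) g
      = evalE α g⁻¹ := by
  induction α using FreeGroup.induction_on with
  | C1 => simp [evalE]
  | of φ =>
      show _ = (FreeGroup.lift _) (FreeGroup.of φ)
      simp [evalE, FreeGroup.lift_apply_of, map_inv]
  | inv_of φ _ =>
      simp [evalE, FreeGroup.lift_apply_of, map_inv]
  | mul x y hx hy => simp only [evalE, map_mul] at *; rw [hx, hy]

open scoped commutatorElement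

/-- for `G` of nilpotency class at most two and `ψ = id`, the
opposite operation `g ∘̂_α h = (g⁻¹ ∘_α h⁻¹)⁻¹` equals `∘_{id,β}` with
`β = (of id)⁻¹ · σ(α)`, where `σ : 𝓔 → 𝓔` sends each generator `of φ` to
`(of φ)⁻¹`; hence the opposite brace lies in the same brace block. -/
theorem opposite_in_brace_block {G : Type*} [Group G]
    (hG : ∀ g h : G, ⁅g, h⁆ ∈ Subgroup.center G)
    (α : FreeGroup (Monoid.End G)) (g h : G) :
    op (1 : Monoid.End G)
        ((FreeGroup.of (1 : Monoid.End G))⁻¹ *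
          FreeGroup.lift (fun φ : Monoid.End G => (FreeGroup.of φ)⁻¹) α) g h =
      (op (1 : Monoid.End G) α g⁻¹ h⁻¹)⁻¹ := by
  simp only [op, evalE, map_mul, map_inv, FreeGroup.lift_apply_of,
    show ∀ x : G, (1 : Monoid.End G) x = x from fun _ => rfl]
  have := evalE_sigma α g
  simp only [evalE] at this
  rw [this]
  group
  simp only [zpow_neg, zpow_one, map_inv]
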